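/- Under the interference-alignment hypotheses, set t = ⌈r²/l⌉. For every proper subset F ⊊ {1,…,k} with |F| = m: (a) if m ≤ t, then dim(Σ_{i∈F} rowSpace(S_i)) = m·(l/r); (b) if m = t + e with e ≥ 1, then dim(Σ_{i∈F} rowSpace(S_i)) ≥ l − (l/r)·(r−t)·((r−1)/r)^e, as an inequality of real numbers. -/

import Mathlib

open Module Submodule

section Aux

variable {𝔽 : Type*} [Field 𝔽]

lemma ia_map_span {a b c : ℕ} (M : Matrix (Fin a) (Fin b) 𝔽) (B : Matrix (Fin b) (Fin c) 𝔽) :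
    (Submodule.span 𝔽 (Set.range M)).map B.vecMulLinear
      = Submodule.span 𝔽 (Set.range (M * B)) := by
  have hfun : ⇑B.vecMulLinear ∘ M = M * B := by
    funext i j
    change B.vecMulLinear (M i) j = _
    simp [Matrix.mul_apply, Matrix.vecMul, dotProduct]
  rw [Submodule.map_span, ← hfun]
  exact congrArg (Submodule.span 𝔽) (Set.range_comp _ _).symm

lemma ia_finrank_map {n : ℕ} {A : Matrix (Fin n) (Fin n) 𝔽} (h : IsUnit A)
    (p : Submodule 𝔽 (Fin n → 𝔽)) :
    Module.finrank 𝔽 (p.map A.vecMulLinear) = Module.finrank 𝔽 p := by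
  obtain ⟨u, rfl⟩ := h
  let e : (Fin n → 𝔽) ≃ₗ[𝔽] (Fin n → 𝔽) :=
    LinearEquiv.ofLinear (Matrix.vecMulLinear u.val) (Matrix.vecMulLinear ↑u⁻¹)
      (LinearMap.ext fun x => by
        simp only [LinearMap.comp_apply, Matrix.vecMulLinear_apply, LinearMap.id_apply,
          Matrix.vecMul_vecMul, Units.inv_mul, Matrix.vecMul_one])
      (LinearMap.ext fun x => by
        simp only [LinearMap.comp_apply, Matrix.vecMulLinear_apply, LinearMap.id_apply,
          Matrix.vecMul_vecMul, Units.mul_inv, Matrix.vecMul_one])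
  have : (Matrix.vecMulLinear u.val) = (e : (Fin n → 𝔽) →ₗ[𝔽] (Fin n → 𝔽)) := rfl
  rw [this, LinearEquiv.finrank_map_eq]

lemma ia_sup_bound {N : ℕ} {V : Type*} [AddCommGroup V] [Module 𝔽 V] [FiniteDimensional 𝔽 V]
    (P : Fin N → Submodule 𝔽 V) (W : Submodule 𝔽 V) (hWP : ∀ u, W ≤ P u) {b : ℕ}
    (hb : ∀ u, Module.finrank 𝔽 (P u) ≤ b) (s : Finset (Fin N)) :
    Module.finrank 𝔽 ↥(⨆ u ∈ s, P u) + s.card * Module.finrank 𝔽 W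
      ≤ s.card * b + Module.finrank 𝔽 W := by
  classical
  induction s using Finset.induction with
  | empty =>
    have he : (⨆ u ∈ (∅ : Finset (Fin N)), P u) = ⊥ := by
      simp
    rw [he]
    simp [finrank_bot]
  | @insert j s hj ih =>
    rw [Finset.iSup_insert, Finset.card_insert_of_notMem hj]
    rcases s.eq_empty_or_nonempty with rfl | ⟨u₀, hu₀⟩
    · have he : (⨆ u ∈ (∅ : Finset (Fin N)), P u) = ⊥ := by simp
      rw [he, sup_bot_eq]
      simpa using hb j
    · have hWY : W ≤ ⨆ u ∈ s, P u :=
        le_trans (hWP u₀) (le_iSup₂ (f := fun u _ => P u) u₀ hu₀)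
      have h1 : Module.finrank 𝔽 ↥(P j ⊔ ⨆ u ∈ s, P u)
            + Module.finrank 𝔽 ↥(P j ⊓ ⨆ u ∈ s, P u)
          = Module.finrank 𝔽 ↥(P j) + Module.finrank 𝔽 ↥(⨆ u ∈ s, P u) :=
        Submodule.finrank_sup_add_finrank_inf_eq _ _
      have h2 : Module.finrank 𝔽 W ≤ Module.finrank 𝔽 ↥(P j ⊓ ⨆ u ∈ s, P u) :=
        Submodule.finrank_mono (le_inf (hWP j) hWY)
      have h3 := hb j
      rw [Nat.succ_mul, Nat.succ_mul]
      linarith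

end Aux

section Main

variable {𝔽 : Type*} [Field 𝔽] {k r l : ℕ}

lemma ia_key
    (S : Fin k → Matrix (Fin (l / r)) (Fin l) 𝔽)
    (C : Fin r → Fin k → Matrix (Fin l) (Fin l) 𝔽)
    (hCinv : ∀ u j, IsUnit (C u j))
    (hIA3 : ∀ i : Fin k,
      (⨆ u : Fin r, Submodule.span 𝔽 (Set.range (S i * C u i))) = ⊤)
    (j : Fin k) (W : Submodule 𝔽 (Fin l → 𝔽))
    (hW : ∀ u, W.map (C u j).vecMulLinear = W) :
    l + r * finrank 𝔽 W
      ≤ r * finrank 𝔽 ↥(W ⊔ span 𝔽 (Set.range (S j))) + finrank 𝔽 W := by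
  classical
  have hPW : ∀ u : Fin r, W ≤ (W ⊔ span 𝔽 (Set.range (S j))).map (C u j).vecMulLinear := by
    intro u
    rw [Submodule.map_sup, hW u]
    exact le_sup_left
  have hPb : ∀ u : Fin r,
      finrank 𝔽 ↥((W ⊔ span 𝔽 (Set.range (S j))).map (C u j).vecMulLinear)
        ≤ finrank 𝔽 ↥(W ⊔ span 𝔽 (Set.range (S j))) := fun u =>
    le_of_eq (ia_finrank_map (hCinv u j) _)
  have htop : (⨆ u ∈ (Finset.univ : Finset (Fin r)),
      (W ⊔ span 𝔽 (Set.range (S j))).map (C u j).vecMulLinear) = ⊤ := by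
    rw [eq_top_iff, ← hIA3 j]
    refine iSup_le fun u => ?_
    have h1 : span 𝔽 (Set.range (S j * C u j))
        ≤ (W ⊔ span 𝔽 (Set.range (S j))).map (C u j).vecMulLinear := by
      rw [Submodule.map_sup, hW u, ia_map_span]
      exact le_sup_right
    exact le_trans h1 (le_iSup₂
      (f := fun u _ => (W ⊔ span 𝔽 (Set.range (S j))).map (C u j).vecMulLinear)
      u (Finset.mem_univ u))
  have hB := ia_sup_bound
    (fun u : Fin r => (W ⊔ span 𝔽 (Set.range (S j))).map (C u j).vecMulLinear)
    W hPW hPb Finset.univ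
  rw [htop] at hB
  have hl : finrank 𝔽 (⊤ : Submodule 𝔽 (Fin l → 𝔽)) = l := by
    rw [finrank_top, Module.finrank_fin_fun]
  rwa [hl, Finset.card_univ, Fintype.card_fin] at hB

lemma ia_rec
    (S : Fin k → Matrix (Fin (l / r)) (Fin l) 𝔽)
    (C : Fin r → Fin k → Matrix (Fin l) (Fin l) 𝔽)
    (hCinv : ∀ u j, IsUnit (C u j))
    (hIA1 : ∀ (i j : Fin k), j ≠ i → ∀ u : Fin r,
      Submodule.span 𝔽 (Set.range (S i * C u j)) = Submodule.span 𝔽 (Set.range (S i)))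
    (hIA3 : ∀ i : Fin k,
      (⨆ u : Fin r, Submodule.span 𝔽 (Set.range (S i * C u i))) = ⊤)
    (G : Finset (Fin k)) (j : Fin k) (hj : j ∉ G) :
    l + r * finrank 𝔽 ↥(⨆ i ∈ G, span 𝔽 (Set.range (S i)))
      ≤ r * finrank 𝔽 ↥(⨆ i ∈ insert j G, span 𝔽 (Set.range (S i)))
        + finrank 𝔽 ↥(⨆ i ∈ G, span 𝔽 (Set.range (S i))) := by
  have hW : ∀ u, (⨆ i ∈ G, span 𝔽 (Set.range (S i))).map (C u j).vecMulLinear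
      = ⨆ i ∈ G, span 𝔽 (Set.range (S i)) := by
    intro u
    rw [Submodule.map_iSup]
    refine iSup_congr fun i => ?_
    rw [Submodule.map_iSup]
    refine iSup_congr fun hi => ?_
    exact (ia_map_span (S i) (C u j)).trans
      (hIA1 i j (by rintro rfl; exact hj hi) u)
  have h := ia_key S C hCinv hIA3 j _ hW
  rw [Finset.iSup_insert, sup_comm]
  exact h

lemma ia_upper (S : Fin k → Matrix (Fin (l / r)) (Fin l) 𝔽) (F : Finset (Fin k)) :
    finrank 𝔽 ↥(⨆ i ∈ F, span 𝔽 (Set.range (S i))) ≤ F.card * (l / r) := by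
  classical
  induction F using Finset.induction with
  | empty =>
    have he : (⨆ i ∈ (∅ : Finset (Fin k)), span 𝔽 (Set.range (S i))) = ⊥ := by simp
    rw [he]
    simp [finrank_bot]
  | @insert j s hj ih =>
    rw [Finset.iSup_insert, Finset.card_insert_of_notMem hj]
    have h1 : finrank 𝔽 ↥(span 𝔽 (Set.range (S j))) ≤ l / r := by
      have h := finrank_range_le_card (R := 𝔽) (b := (S j : Fin (l / r) → Fin l → 𝔽))
      exact h.trans (by rw [Fintype.card_fin])
    have h2 := Submodule.finrank_sup_add_finrank_inf_eq
      (span 𝔽 (Set.range (S j))) (⨆ i ∈ s, span 𝔽 (Set.range (S i)))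
    rw [Nat.succ_mul]
    linarith

lemma ia_lower (hrl : r ∣ l)
    (S : Fin k → Matrix (Fin (l / r)) (Fin l) 𝔽)
    (C : Fin r → Fin k → Matrix (Fin l) (Fin l) 𝔽)
    (hCinv : ∀ u j, IsUnit (C u j))
    (hIA1 : ∀ (i j : Fin k), j ≠ i → ∀ u : Fin r,
      Submodule.span 𝔽 (Set.range (S i * C u j)) = Submodule.span 𝔽 (Set.range (S i)))
    (hIA3 : ∀ i : Fin k,
      (⨆ u : Fin r, Submodule.span 𝔽 (Set.range (S i * C u i))) = ⊤) :
    ∀ m (F : Finset (Fin k)), F.card = m → m * (l / r) < r + l / r →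
      m * (l / r) ≤ finrank 𝔽 ↥(⨆ i ∈ F, span 𝔽 (Set.range (S i))) := by
  intro m
  induction m with
  | zero => simp
  | succ n ih =>
    intro F hF hc
    have hβ : r * (l / r) = l := Nat.mul_div_cancel' hrl
    have hne : F.Nonempty := by rw [← Finset.card_pos, hF]; omega
    obtain ⟨j, hj⟩ := hne
    have hj' : j ∉ F.erase j := Finset.notMem_erase j F
    have hcard : (F.erase j).card = n := by
      rw [Finset.card_erase_of_mem hj, hF]
      omega
    have e0 : (n + 1) * (l / r) = n * (l / r) + l / r := by ring
    have hclt : n * (l / r) < r := by linarith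
    have hlow : n * (l / r) ≤ finrank 𝔽 ↥(⨆ i ∈ F.erase j, span 𝔽 (Set.range (S i))) :=
      ih (F.erase j) hcard (by linarith [Nat.zero_le (l / r)])
    have hup : finrank 𝔽 ↥(⨆ i ∈ F.erase j, span 𝔽 (Set.range (S i))) ≤ n * (l / r) := by
      have := ia_upper S (F.erase j)
      rwa [hcard] at this
    have ha : finrank 𝔽 ↥(⨆ i ∈ F.erase j, span 𝔽 (Set.range (S i))) = n * (l / r) :=
      le_antisymm hup hlow
    have hrec := ia_rec S C hCinv hIA1 hIA3 (F.erase j) j hj'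
    rw [Finset.insert_erase hj, ha] at hrec
    set d := finrank 𝔽 ↥(⨆ i ∈ F, span 𝔽 (Set.range (S i))) with hd
    by_contra hcon
    push_neg at hcon
    have hd1 : d + 1 ≤ n * (l / r) + l / r := by linarith
    have h1 : r * (d + 1) ≤ r * (n * (l / r) + l / r) := Nat.mul_le_mul_left r hd1
    have e1 : r * (d + 1) = r * d + r := by ring
    have e2 : r * (n * (l / r) + l / r) = r * (n * (l / r)) + l := by
      rw [Nat.mul_add, hβ]
    linarith

end Main

theorem stmt_12 {𝔽 : Type*} [Field 𝔽] (k r l : ℕ)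
    (hk : 0 < k) (hr : 2 ≤ r) (hl : 0 < l) (hrl : r ∣ l)
    (S : Fin k → Matrix (Fin (l / r)) (Fin l) 𝔽)
    (C : Fin r → Fin k → Matrix (Fin l) (Fin l) 𝔽)
    (hCinv : ∀ u j, IsUnit (C u j))
    (hC1 : ∀ j, C ⟨0, by omega⟩ j = 1)
    (hIA1 : ∀ (i j : Fin k), j ≠ i → ∀ u : Fin r,
      Submodule.span 𝔽 (Set.range (S i * C u j)) = Submodule.span 𝔽 (Set.range (S i)))
    (hIA2 : ∀ i : Fin k, iSupIndep
      fun u : Fin r => Submodule.span 𝔽 (Set.range (S i * C u i)))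
    (hIA3 : ∀ i : Fin k,
      (⨆ u : Fin r, Submodule.span 𝔽 (Set.range (S i * C u i))) = ⊤)
    (t : ℕ) (ht : t = r ^ 2 ⌈/⌉ l)
    (F : Finset (Fin k)) (hF : F ≠ Finset.univ) (m : ℕ) (hm : F.card = m) :
    (m ≤ t →
      Module.finrank 𝔽 ↥(⨆ i ∈ F, Submodule.span 𝔽 (Set.range (S i))) = m * (l / r)) ∧
    (∀ e : ℕ, 1 ≤ e → m = t + e →
      (l : ℝ) - ((l : ℝ) / r) * ((r : ℝ) - t) * (((r : ℝ) - 1) / r) ^ e ≤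
        (Module.finrank 𝔽 ↥(⨆ i ∈ F, Submodule.span 𝔽 (Set.range (S i))) : ℝ)) := by
  subst hm
  have hβ : r * (l / r) = l := Nat.mul_div_cancel' hrl
  have hr2 : 1 ≤ r ^ 2 := Nat.one_le_pow _ _ (by omega)
  have ht1 : t = (r ^ 2 - 1) / l + 1 := by
    rw [ht, Nat.ceilDiv_eq_add_pred_div, show r ^ 2 + l - 1 = (r ^ 2 - 1) + l by omega,
      Nat.add_div_right _ hl]
  have htl : (t - 1) * l < r ^ 2 := by
    rw [ht1]
    simp only [Nat.add_sub_cancel]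
    calc (r ^ 2 - 1) / l * l ≤ r ^ 2 - 1 := Nat.div_mul_le_self _ _
    _ < r ^ 2 := by omega
  have htβ : (t - 1) * (l / r) < r := by
    have h1 : (t - 1) * l = r * ((t - 1) * (l / r)) := by
      conv_lhs => rw [← hβ]
      ring
    have h2 : r * ((t - 1) * (l / r)) < r * r := by
      rw [← h1]
      calc (t - 1) * l < r ^ 2 := htl
      _ = r * r := by ring
    exact Nat.lt_of_mul_lt_mul_left h2
  have key : ∀ m, m ≤ t → m * (l / r) < r + l / r := by
    intro m hmt
    have h1 : m ≤ (t - 1) + 1 := by omega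
    have h2 : m * (l / r) ≤ ((t - 1) + 1) * (l / r) := Nat.mul_le_mul_right _ h1
    have h3 : ((t - 1) + 1) * (l / r) = (t - 1) * (l / r) + l / r := by ring
    linarith
  have partAeq : ∀ m (G : Finset (Fin k)), G.card = m → m ≤ t →
      Module.finrank 𝔽 ↥(⨆ i ∈ G, Submodule.span 𝔽 (Set.range (S i))) = m * (l / r) := by
    intro m G hGc hmt
    refine le_antisymm ?_ (ia_lower hrl S C hCinv hIA1 hIA3 m G hGc (key m hmt))
    have h := ia_upper S G
    rwa [hGc] at h
  have hr0 : (0 : ℝ) < (r : ℝ) := by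
    have : (0 : ℕ) < r := by omega
    exact_mod_cast this
  have hrne : (r : ℝ) ≠ 0 := ne_of_gt hr0
  have hr1 : (0 : ℝ) ≤ (r : ℝ) - 1 := by
    have : (2 : ℝ) ≤ (r : ℝ) := by exact_mod_cast hr
    linarith
  constructor
  · intro hmt
    exact partAeq _ F rfl hmt
  · intro e he hme
    have partB : ∀ e' (G : Finset (Fin k)), G.card = t + e' →
        (l : ℝ) - ((l : ℝ) / r) * ((r : ℝ) - t) * (((r : ℝ) - 1) / r) ^ e'
          ≤ (Module.finrank 𝔽 ↥(⨆ i ∈ G, Submodule.span 𝔽 (Set.range (S i))) : ℝ) := by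
      intro e'
      induction e' with
      | zero =>
        intro G hG
        have hd := partAeq t G (by omega) le_rfl
        have hlr : ((l : ℕ) : ℝ) = (r : ℝ) * ((l / r : ℕ) : ℝ) := by exact_mod_cast hβ.symm
        have hdiv : (l : ℝ) / (r : ℝ) = ((l / r : ℕ) : ℝ) := by
          rw [hlr]
          field_simp
        have hdc : (Module.finrank 𝔽 ↥(⨆ i ∈ G, Submodule.span 𝔽 (Set.range (S i))) : ℝ)
            = (t : ℝ) * ((l / r : ℕ) : ℝ) := by
          rw [hd]
          push_cast
          ring
        rw [hdc, pow_zero, hdiv, hlr]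
        ring_nf
        exact le_rfl

      | succ e' ih =>
        intro G hG
        have hne : G.Nonempty := by rw [← Finset.card_pos, hG]; omega
        obtain ⟨j, hj⟩ := hne
        have hj' : j ∉ G.erase j := Finset.notMem_erase j G
        have hcard : (G.erase j).card = t + e' := by
          rw [Finset.card_erase_of_mem hj, hG]
          omega
        have hrecN := ia_rec S C hCinv hIA1 hIA3 (G.erase j) j hj'
        rw [Finset.insert_erase hj] at hrecN
        have IH := ih (G.erase j) hcard
        set a := Module.finrank 𝔽 ↥(⨆ i ∈ G.erase j, Submodule.span 𝔽 (Set.range (S i))) with ha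
        set d := Module.finrank 𝔽 ↥(⨆ i ∈ G, Submodule.span 𝔽 (Set.range (S i))) with hd
        have hrec : (l : ℝ) + (r : ℝ) * (a : ℝ) ≤ (r : ℝ) * (d : ℝ) + (a : ℝ) := by
          exact_mod_cast hrecN
        have h5 : (l : ℝ) + ((r : ℝ) - 1) * (a : ℝ) ≤ (d : ℝ) * (r : ℝ) := by nlinarith
        have h6 : (l : ℝ) + ((r : ℝ) - 1) *
              ((l : ℝ) - ((l : ℝ) / r) * ((r : ℝ) - t) * (((r : ℝ) - 1) / r) ^ e')
            ≤ (l : ℝ) + ((r : ℝ) - 1) * (a : ℝ) := by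
          have := mul_le_mul_of_nonneg_left IH hr1
          linarith
        have h7 : ((l : ℝ) + ((r : ℝ) - 1) * (a : ℝ)) / (r : ℝ) ≤ (d : ℝ) := by
          rw [div_le_iff₀ hr0]
          exact h5
        have heq : (l : ℝ) - ((l : ℝ) / r) * ((r : ℝ) - t) * (((r : ℝ) - 1) / r) ^ (e' + 1)
            = ((l : ℝ) + ((r : ℝ) - 1) *
              ((l : ℝ) - ((l : ℝ) / r) * ((r : ℝ) - t) * (((r : ℝ) - 1) / r) ^ e')) / (r : ℝ) := by
          rw [pow_succ]
          field_simp
          ring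
        rw [heq]
        calc ((l : ℝ) + ((r : ℝ) - 1) *
              ((l : ℝ) - ((l : ℝ) / r) * ((r : ℝ) - t) * (((r : ℝ) - 1) / r) ^ e')) / (r : ℝ)
            ≤ ((l : ℝ) + ((r : ℝ) - 1) * (a : ℝ)) / (r : ℝ) := by
              apply div_le_div_of_nonneg_right h6 hr0.le
          _ ≤ (d : ℝ) := h7
    exact partB e F hme
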